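/- Let p : G₁ → G₂ be a surjective homomorphism of abelian groups and i : N → G₂ a homomorphism of commutative monoids. Then the group completion of the pullback monoid G₁ ×_{G₂} N is naturally isomorphic to the pullback of groups G₁ ×_{G₂} N^gp, where N^gp → G₂ is induced by i. -/

import Mathlib

/-- `ι : M →* G` realizes the commutative group `G` as the group completion of the
commutative monoid `M`. -/
def IsGroupCompletion {M G : Type*} [CommMonoid M] [CommGroup G] (ι : M →* G) : Prop :=
  ∀ (H : Type*) [CommGroup H] (f : M →* H), ∃! g : G →* H, g.comp ι = f

namespace GCModel

variable (M : Type*) [CommMonoid M]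

abbrev K := Localization (⊤ : Submonoid M)

variable {M}

instance : Inv (K M) :=
  ⟨fun x => Localization.liftOn x (fun a b => Localization.mk (b : M) ⟨a, Submonoid.mem_top _⟩) (by
    intro a c b d h
    rw [Localization.r_iff_exists] at h
    obtain ⟨e, he⟩ := h
    rw [Localization.mk_eq_mk_iff, Localization.r_iff_exists]
    refine ⟨e, ?_⟩
    simp only [Submonoid.coe_mul]
    simpa [mul_comm, mul_left_comm] using he.symm)⟩

theorem mk_inv (a : M) (b : (⊤ : Submonoid M)) :
    (Localization.mk a b)⁻¹ = Localization.mk (b : M) ⟨a, Submonoid.mem_top _⟩ := rfl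

instance : CommGroup (K M) :=
  { (inferInstance : CommMonoid (K M)) with
    inv := Inv.inv
    inv_mul_cancel := fun x => by
      induction x using Localization.ind with
      | _ y =>
        obtain ⟨a, b⟩ := y
        rw [mk_inv, Localization.mk_mul]
        have : (b : M) * a = ((⟨a, Submonoid.mem_top _⟩ * b : (⊤ : Submonoid M)) : M) := by
          simp [mul_comm]
        rw [this]
        exact Localization.mk_self _ }

variable (M) in
def toK : M →* K M where
  toFun a := Localization.mk a 1
  map_one' := Localization.mk_one
  map_mul' a b := by rw [Localization.mk_mul, one_mul]

theorem toK_eq_iff {a b : M} : toK M a = toK M b ↔ ∃ c, c * a = c * b := by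
  rw [toK, MonoidHom.coe_mk, OneHom.coe_mk, Localization.mk_eq_mk_iff, Localization.r_iff_exists]
  constructor
  · rintro ⟨e, he⟩; exact ⟨e, by simpa using he⟩
  · rintro ⟨c, hc⟩; exact ⟨⟨c, Submonoid.mem_top _⟩, by simpa using hc⟩

theorem K_frac (x : K M) : ∃ a b : M, x = toK M a * (toK M b)⁻¹ := by
  induction x using Localization.ind with
  | _ y =>
    obtain ⟨a, s⟩ := y
    refine ⟨a, s, ?_⟩
    rw [toK, MonoidHom.coe_mk, OneHom.coe_mk, mk_inv, Localization.mk_mul]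
    exact congrArg₂ Localization.mk (by simp) (Subtype.ext (by simp))

theorem isGC_toK : IsGroupCompletion (toK M) := by
  intro H _ f
  refine ⟨(Localization.monoidOf (⊤ : Submonoid M)).lift
    (g := f) (fun y => Group.isUnit _), ?_, ?_⟩
  · ext a
    exact (Localization.monoidOf (⊤ : Submonoid M)).lift_eq _ a
  · intro g hg
    ext x
    obtain ⟨a, b, rfl⟩ := K_frac x
    have h1 : ∀ (g' : K M →* H), g'.comp (toK M) = f → ∀ m, g' (toK M m) = f m := by
      intro g' hg' m; exact DFunLike.congr_fun hg' m
    rw [map_mul, map_mul, map_inv, map_inv, h1 g hg, h1 g hg,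
      h1 _ (by ext a; exact (Localization.monoidOf (⊤ : Submonoid M)).lift_eq _ a),
      h1 _ (by ext a; exact (Localization.monoidOf (⊤ : Submonoid M)).lift_eq _ a)]

end GCModel

section Abstract

variable {M G : Type*} [CommMonoid M] [CommGroup G]

/-- Characters into `ℚ/ℤ` separate points of any commutative group. -/
theorem exists_mulchar {G : Type*} [CommGroup G] {x : G} (hx : x ≠ 1) :
    ∃ c : G →* Multiplicative (AddCircle (1 : ℚ)), c x ≠ 1 := by
  obtain ⟨c, hc⟩ := CharacterModule.exists_character_apply_ne_zero_of_ne_zero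
    (A := Additive G) (a := Additive.ofMul x) (by simpa using hx)
  refine ⟨AddMonoidHom.toMultiplicativeRight c, ?_⟩
  exact hc

/-- Any group completion identifies `ι a = ι b` with stable equality. -/
theorem gc_eq_iff {ι : M →* G} (h : IsGroupCompletion ι) {a b : M} :
    ι a = ι b ↔ ∃ c, c * a = c * b := by
  constructor
  · intro hab
    rw [← GCModel.toK_eq_iff]
    by_contra hne
    have hx : GCModel.toK M a * (GCModel.toK M b)⁻¹ ≠ 1 := by
      intro h1
      exact hne (by rwa [mul_inv_eq_one] at h1)
    obtain ⟨χ, hχ⟩ := exists_mulchar hx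
    set f : M →* ULift (Multiplicative (AddCircle (1 : ℚ))) :=
      (MulEquiv.ulift.symm.toMonoidHom.comp (χ.comp (GCModel.toK M))) with hf
    obtain ⟨g, hg, -⟩ := h _ f
    have h1 : g (ι a) = g (ι b) := by rw [hab]
    have h2 : f a = f b := by
      rw [← DFunLike.congr_fun hg a, ← DFunLike.congr_fun hg b]; exact h1
    have h3 : χ (GCModel.toK M a) = χ (GCModel.toK M b) :=
      congrArg ULift.down h2
    rw [map_mul, map_inv, h3, mul_inv_cancel] at hχ
    exact hχ rfl
  · rintro ⟨c, hc⟩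
    have : ι (c * a) = ι (c * b) := by rw [hc]
    rw [map_mul, map_mul] at this
    exact mul_left_cancel this

/-- Every element of a group completion is a fraction of elements of `M`. -/
theorem gc_frac {ι : M →* G} (h : IsGroupCompletion ι) (x : G) :
    ∃ a b : M, x = ι a * (ι b)⁻¹ := by
  set S : Subgroup G := Subgroup.closure (Set.range ι) with hS
  have htop : S = ⊤ := by
    by_contra hne
    have hex : ∃ y : G, y ∉ S := by
      by_contra h2
      push_neg at h2
      exact hne ((Subgroup.eq_top_iff' S).mpr h2)
    obtain ⟨y, hy⟩ := hex
    have hy1 : ((y : G ⧸ S) : G ⧸ S) ≠ 1 := fun h1 =>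
      hy ((QuotientGroup.eq_one_iff y).mp h1)
    obtain ⟨χ, hχ⟩ := exists_mulchar hy1
    set f : M →* ULift (Multiplicative (AddCircle (1 : ℚ))) := 1 with hf
    obtain ⟨g, -, hu⟩ := h _ f
    have h₁ : (MulEquiv.ulift.symm.toMonoidHom.comp
        (χ.comp (QuotientGroup.mk' S))).comp ι = f := by
      ext m
      have hm : ((ι m : G) : G ⧸ S) = 1 :=
        (QuotientGroup.eq_one_iff _).mpr (Subgroup.subset_closure ⟨m, rfl⟩)
      simp [hf, hm]
    have h₂ : (1 : G →* ULift (Multiplicative (AddCircle (1 : ℚ)))).comp ι = f := by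
      ext m; simp [hf]
    have heq := (hu _ h₁).trans (hu _ h₂).symm
    have hone : χ ((y : G ⧸ S)) = 1 := congrArg ULift.down (DFunLike.congr_fun heq y)
    exact hχ hone
  have hT : ∀ z ∈ S, ∃ a b : M, z = ι a * (ι b)⁻¹ := by
    intro z hz
    refine Subgroup.closure_induction ?_ ⟨1, 1, by simp⟩ ?_ ?_ hz
    · rintro _ ⟨m, rfl⟩
      exact ⟨m, 1, by simp⟩
    · rintro _ _ _ _ ⟨a, b, rfl⟩ ⟨c, d, rfl⟩
      exact ⟨a * c, b * d, by
        rw [map_mul, map_mul, mul_inv]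
        exact mul_mul_mul_comm _ _ _ _⟩
    · rintro _ _ ⟨a, b, rfl⟩
      exact ⟨b, a, by rw [mul_inv, inv_inv, mul_comm]⟩
  exact hT x (htop ▸ Subgroup.mem_top x)

end Abstract

/-- The pullback monoid `G₁ ×_{G₂} N` of `p : G₁ →* G₂` and `i : N →* G₂`, as a
submonoid of `G₁ × N`. -/
def pullbackSubmonoid {G₁ G₂ N : Type*} [CommGroup G₁] [CommGroup G₂] [CommMonoid N]
    (p : G₁ →* G₂) (i : N →* G₂) : Submonoid (G₁ × N) where
  carrier := {x | p x.1 = i x.2}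
  one_mem' := by simp
  mul_mem' := by
    intro a b ha hb
    simp only [Set.mem_setOf_eq, Prod.fst_mul, Prod.snd_mul, map_mul] at *
    rw [ha, hb]

/-- The pullback group `G₁ ×_{G₂} H` of `p : G₁ →* G₂` and `φ : H →* G₂`, as a
subgroup of `G₁ × H`. -/
def pullbackSubgroup {G₁ G₂ H : Type*} [CommGroup G₁] [CommGroup G₂] [CommGroup H]
    (p : G₁ →* G₂) (φ : H →* G₂) : Subgroup (G₁ × H) where
  carrier := {x | p x.1 = φ x.2}
  one_mem' := by simp
  mul_mem' := by
    intro a b ha hb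
    simp only [Set.mem_setOf_eq, Prod.fst_mul, Prod.snd_mul, map_mul] at *
    rw [ha, hb]
  inv_mem' := by
    intro a ha
    simp only [Set.mem_setOf_eq, Prod.fst_inv, Prod.snd_inv, map_inv] at *
    rw [ha]

set_option maxHeartbeats 1000000 in
set_option synthInstance.maxHeartbeats 400000 in
/-- For a surjective homomorphism of abelian groups `p : G₁ → G₂` and a
monoid homomorphism `i : N → G₂`, the group completion of the pullback monoid
`G₁ ×_{G₂} N` is naturally isomorphic to the pullback group `G₁ ×_{G₂} N^gp`. -/
theorem stmt_6 {G₁ G₂ N Ngp Pgp : Type*} [CommGroup G₁] [CommGroup G₂] [CommMonoid N]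
    [CommGroup Ngp] [CommGroup Pgp]
    (p : G₁ →* G₂) (hp : Function.Surjective p) (i : N →* G₂)
    (ιN : N →* Ngp) (hN : IsGroupCompletion ιN)
    (φ : Ngp →* G₂) (hφ : ∀ n : N, φ (ιN n) = i n)
    (ιP : ↥(pullbackSubmonoid p i) →* Pgp) (hP : IsGroupCompletion ιP) :
    ∃ e : Pgp ≃* ↥(pullbackSubgroup p φ),
      ∀ x : ↥(pullbackSubmonoid p i),
        ((e (ιP x) : G₁ × Ngp)) = ((x : G₁ × N).1, ιN (x : G₁ × N).2) := by
  classical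
  -- the comparison map `j` from the pullback monoid to the pullback group
  set j : ↥(pullbackSubmonoid p i) →* ↥(pullbackSubgroup p φ) :=
    { toFun := fun x => ⟨((x : G₁ × N).1, ιN (x : G₁ × N).2), by
        have hx : p (x : G₁ × N).1 = i (x : G₁ × N).2 := x.2
        show p _ = φ _
        rw [hφ]
        exact hx⟩
      map_one' := Subtype.ext (by simp)
      map_mul' := fun x y => Subtype.ext (by simp) } with hjdef
  have jval : ∀ x, ((j x : G₁ × Ngp)) = ((x : G₁ × N).1, ιN (x : G₁ × N).2) :=
    fun x => rfl
  -- `ψ : K P₀ →* Pgp`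
  obtain ⟨ψ, hψ0, -⟩ := GCModel.isGC_toK (M := ↥(pullbackSubmonoid p i)) Pgp ιP
  have hψ : ∀ x, ψ (GCModel.toK _ x) = ιP x := fun x => DFunLike.congr_fun hψ0 x
  have ψbij : Function.Bijective ψ := by
    constructor
    · rw [injective_iff_map_eq_one]
      intro z hz
      obtain ⟨a, b, rfl⟩ := GCModel.K_frac z
      rw [map_mul, map_inv, hψ, hψ, mul_inv_eq_one] at hz
      obtain ⟨c, hc⟩ := (gc_eq_iff hP).mp hz
      rw [GCModel.toK_eq_iff.mpr ⟨c, hc⟩, mul_inv_cancel]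
    · intro z
      obtain ⟨a, b, hab⟩ := gc_frac hP z
      exact ⟨GCModel.toK _ a * (GCModel.toK _ b)⁻¹,
        by rw [map_mul, map_inv, hψ, hψ, ← hab]⟩
  -- `θ : K P₀ →* Q`
  obtain ⟨θ, hθ0, -⟩ := GCModel.isGC_toK (M := ↥(pullbackSubmonoid p i))
    (↥(pullbackSubgroup p φ)) j
  have hθ : ∀ x, θ (GCModel.toK _ x) = j x := fun x => DFunLike.congr_fun hθ0 x
  have θbij : Function.Bijective θ := by
    constructor
    · rw [injective_iff_map_eq_one]
      intro z hz
      obtain ⟨a, b, rfl⟩ := GCModel.K_frac z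
      rw [map_mul, map_inv, hθ, hθ, mul_inv_eq_one] at hz
      have h0 : ((j a : G₁ × Ngp)) = ((j b : G₁ × Ngp)) := Subtype.ext_iff.mp hz
      rw [jval, jval] at h0
      obtain ⟨h1, h2⟩ := Prod.mk.injEq .. ▸ h0
      obtain ⟨k, hk⟩ := (gc_eq_iff hN).mp h2
      obtain ⟨t, ht⟩ := hp (i k)
      have hc : ((t, k) : G₁ × N) ∈ pullbackSubmonoid p i := ht
      have hcab : (⟨(t, k), hc⟩ : ↥(pullbackSubmonoid p i)) * a
          = ⟨(t, k), hc⟩ * b := by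
        refine Subtype.ext (Prod.ext ?_ ?_)
        · show t * (a : G₁ × N).1 = t * (b : G₁ × N).1
          rw [h1]
        · exact hk
      rw [GCModel.toK_eq_iff.mpr ⟨_, hcab⟩, mul_inv_cancel]
    · rintro ⟨⟨g₁, y⟩, hq⟩
      have hq' : p g₁ = φ y := hq
      obtain ⟨n₁, n₂, hy⟩ := gc_frac hN y
      obtain ⟨t, ht⟩ := hp (i n₂)
      have ha : ((g₁ * t, n₁) : G₁ × N) ∈ pullbackSubmonoid p i := by
        show p (g₁ * t) = i n₁
        rw [map_mul, ht, hq', hy, map_mul, map_inv, hφ, hφ]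
        group
      have hb : ((t, n₂) : G₁ × N) ∈ pullbackSubmonoid p i := ht
      refine ⟨GCModel.toK _ ⟨(g₁ * t, n₁), ha⟩ * (GCModel.toK _ ⟨(t, n₂), hb⟩)⁻¹, ?_⟩
      rw [map_mul, map_inv θ, hθ, hθ]
      refine Subtype.ext (Prod.ext ?_ ?_)
      · show g₁ * t * t⁻¹ = g₁
        group
      · show ιN n₁ * (ιN n₂)⁻¹ = y
        rw [hy]
  refine ⟨(MulEquiv.ofBijective ψ ψbij).symm.trans (MulEquiv.ofBijective θ θbij), ?_⟩
  intro x
  have h1 : (MulEquiv.ofBijective ψ ψbij).symm (ιP x) = GCModel.toK _ x := by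
    rw [MulEquiv.symm_apply_eq]
    exact (hψ x).symm
  show ((θ ((MulEquiv.ofBijective ψ ψbij).symm (ιP x)) : ↥(pullbackSubgroup p φ)) : G₁ × Ngp)
    = ((x : G₁ × N).1, ιN (x : G₁ × N).2)
  rw [h1, hθ]
  exact jval x
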